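/- If a, b are positive elements of a C*-algebra with ‖a − b‖ < ε, then (a − ε)₊ is Cuntz subequivalent to b. -/

import Mathlib

variable {A : Type*} [NormedRing A] [StarRing A] [CStarRing A] [CompleteSpace A]
  [NormedAlgebra ℂ A] [StarModule ℂ A] [PartialOrder A] [StarOrderedRing A]
  [ContinuousFunctionalCalculus ℝ A (IsSelfAdjoint : A → Prop)]

/-- Cuntz subequivalence: `x ≾ y` iff there is a sequence `(vₙ)` with `‖vₙ y vₙ* - x‖ → 0`. -/
def CuntzSub (a b : A) : Prop :=
  ∃ v : ℕ → A, Filter.Tendsto (fun n => ‖v n * b * star (v n) - a‖) Filter.atTop (nhds 0)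

/-- If `‖a - b‖ < ε` then `(a - ε)₊ ≾ b`. -/
theorem cuntzSub_cutoff_of_close (a b : A) (ha : 0 ≤ a) (hb : 0 ≤ b)
    (ε : ℝ) (hε : 0 < ε) (h : ‖a - b‖ < ε) :
    CuntzSub (cfc (fun t : ℝ => max (t - ε) 0) a) b := by
  letI : CStarAlgebra A := {}
  have ha' : IsSelfAdjoint a := .of_nonneg ha
  have hb' : IsSelfAdjoint b := .of_nonneg hb
  set δ : ℝ := ‖a - b‖ with hδ
  have hδ0 : 0 ≤ δ := norm_nonneg _
  set μ : ℝ := ε - δ with hμdef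
  have hμ : 0 < μ := by simpa [hμdef] using h
  -- the cut-off element
  set f : ℝ → ℝ := fun t => max (t - ε) 0 with hf
  have hf_cont : Continuous f := (continuous_id.sub continuous_const).max continuous_const
  set e : A := cfc f a with he
  -- the square root of the cut-off element
  set r : A := cfc (fun t => Real.sqrt (f t)) a with hrdef
  have hsf_cont : Continuous fun t => Real.sqrt (f t) := Real.continuous_sqrt.comp hf_cont
  have hr_sa : IsSelfAdjoint r := cfc_predicate _ a
  have hrr : r * r = e := by
    rw [hrdef, ← cfc_mul _ _ a hsf_cont.continuousOn hsf_cont.continuousOn]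
    exact cfc_congr fun t _ => Real.mul_self_sqrt (le_max_right _ _)
  -- the interpolating element w
  set g : ℝ → ℝ := fun t => Real.sqrt (f t / max (t - δ) μ) with hg
  have hden : ∀ t : ℝ, (0:ℝ) < max (t - δ) μ := fun t => lt_max_of_lt_right hμ
  have hg_cont : Continuous g := Real.continuous_sqrt.comp <|
    hf_cont.div ((continuous_id.sub continuous_const).max continuous_const)
      fun t => (hden t).ne'
  set w : A := cfc g a with hw
  have hw_sa : IsSelfAdjoint w := cfc_predicate _ a
  -- `a - δ ≤ b`
  have hab : a - algebraMap ℝ A δ ≤ b := by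
    have h1 : a - b ≤ algebraMap ℝ A δ := IsSelfAdjoint.le_algebraMap_norm_self (ha'.sub hb')
    calc a - algebraMap ℝ A δ ≤ a - (a - b) := by
          exact sub_le_sub_left h1 a
      _ = b := by abel
  -- `w * (a - δ) * w = e`
  have hsub_eq : a - algebraMap ℝ A δ = cfc (fun t : ℝ => t - δ) a := by
    rw [cfc_sub _ _ a continuous_id'.continuousOn continuous_const.continuousOn,
      cfc_id' ℝ a, cfc_const δ a]
  have hkey : w * (a - algebraMap ℝ A δ) * w = e := by
    rw [hsub_eq, hw, he, mul_assoc,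
      ← cfc_mul (fun t : ℝ => t - δ) g a ((continuous_id'.sub continuous_const).continuousOn) hg_cont.continuousOn,
      ← cfc_mul g (fun t : ℝ => (t - δ) * g t) a hg_cont.continuousOn
        (((continuous_id'.sub continuous_const).mul hg_cont).continuousOn)]
    apply cfc_congr
    intro t _
    show g t * ((t - δ) * g t) = f t
    have hg2 : g t * g t = f t / max (t - δ) μ :=
      Real.mul_self_sqrt (div_nonneg (le_max_right _ _) (hden t).le)
    rcases le_or_gt t ε with htε | htε
    · have hft : f t = 0 := max_eq_right (by linarith)
      have hgt0 : g t = 0 := by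
        rw [hg]; simp only [hft, zero_div, Real.sqrt_zero]
      simp [hgt0, hft]
    · have hft : f t = t - ε := max_eq_left (by linarith)
      have hmax : max (t - δ) μ = t - δ := max_eq_left (by linarith [hμdef])
      have hrw : g t * ((t - δ) * g t) = (g t * g t) * (t - δ) := by ring
      rw [hrw, hg2, hmax, div_mul_cancel₀]
      have : (0:ℝ) < t - δ := by
        have : δ < ε := h
        linarith
      exact this.ne'
  -- `e ≤ y := w * b * w`
  set y : A := w * b * w with hy
  have hy_nonneg : 0 ≤ y := hw_sa.conjugate_nonneg hb
  have hey : e ≤ y := by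
    rw [← hkey, hy]
    exact hw_sa.conjugate_le_conjugate hab
  have hy_sa : IsSelfAdjoint y := .of_nonneg hy_nonneg
  have he_nonneg : 0 ≤ e := cfc_nonneg fun t _ => le_max_right _ _
  -- the spectrum of `y` is nonnegative
  have hspec : ∀ s ∈ spectrum ℝ y, 0 ≤ s := fun s hs => spectrum_nonneg_of_nonneg hy_nonneg hs
  -- the sequence
  set v : ℕ → A := fun n =>
    r * cfc (fun s : ℝ => Real.sqrt ((max s 0 + 1 / (n + 1))⁻¹)) y * w with hv
  refine ⟨v, ?_⟩
  have hbound : ∀ n : ℕ, ‖v n * b * star (v n) - e‖ ≤ 1 / (n + 1) := by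
    intro n
    set t : ℝ := 1 / (n + 1) with htdef
    have ht : (0:ℝ) < t := by positivity
    set hfun : ℝ → ℝ := fun s => Real.sqrt ((max s 0 + t)⁻¹) with hhfun
    have hpos : ∀ s : ℝ, (0:ℝ) < max s 0 + t := fun s => by positivity
    have hh_cont : Continuous hfun := Real.continuous_sqrt.comp <|
      ((continuous_id.max continuous_const).add continuous_const).inv₀ fun s => (hpos s).ne'
    set q : A := cfc hfun y with hq
    have hq_sa : IsSelfAdjoint q := cfc_predicate _ y
    -- q * y * q = cfc (fun s => hfun s * (s * hfun s)) y
    have hqyq : q * y * q = cfc (fun s => hfun s * (s * hfun s)) y := by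
      conv_lhs => rw [← cfc_id' ℝ y hy_sa]
      rw [hq, mul_assoc,
        ← cfc_mul _ _ y continuous_id'.continuousOn hh_cont.continuousOn,
        ← cfc_mul hfun (fun s : ℝ => s * hfun s) y hh_cont.continuousOn ((continuous_id'.mul hh_cont).continuousOn)]
    -- 1 - q * y * q = t • (q * q)
    have hqq : q * q = cfc (fun s => (max s 0 + t)⁻¹) y := by
      rw [hq, ← cfc_mul _ _ y hh_cont.continuousOn hh_cont.continuousOn]
      exact cfc_congr fun s _ => Real.mul_self_sqrt (by positivity)
    have hinv_cont : Continuous fun s : ℝ => (max s 0 + t)⁻¹ :=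
      ((continuous_id.max continuous_const).add continuous_const).inv₀ fun s => (hpos s).ne'
    have hone_sub : 1 - q * y * q = t • (q * q) := by
      rw [hqyq, hqq, ← cfc_smul t _ y hinv_cont.continuousOn, ← cfc_const_one ℝ y hy_sa,
        ← cfc_sub (fun _ : ℝ => (1:ℝ)) (fun s : ℝ => hfun s * (s * hfun s)) y continuous_const.continuousOn
          ((hh_cont.mul (continuous_id'.mul hh_cont)).continuousOn)]
      apply cfc_congr
      intro s hs
      have hs0 : 0 ≤ s := hspec s hs
      have hst : (0:ℝ) < s + t := by linarith
      have hmax : max s 0 = s := max_eq_left hs0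
      have hsq : hfun s * hfun s = (s + t)⁻¹ := by
        rw [hhfun]
        simp only [hmax]
        exact Real.mul_self_sqrt (by positivity)
      show (1:ℝ) - hfun s * (s * hfun s) = t • (max s 0 + t)⁻¹
      have hrw : hfun s * (s * hfun s) = (hfun s * hfun s) * s := by ring
      rw [hrw, hsq, hmax, smul_eq_mul]
      field_simp
      ring
    -- rewrite v n * b * star (v n)
    have hvn : v n = r * q * w := rfl
    have hvbv : v n * b * star (v n) = r * (q * y * q) * r := by
      rw [hvn, hy]
      simp only [star_mul, hw_sa.star_eq, hq_sa.star_eq, hr_sa.star_eq, mul_assoc]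
    -- the key difference formula
    have hdiff : e - v n * b * star (v n) = t • ((r * q) * star (r * q)) := by
      rw [hvbv]
      have h1 : e - r * (q * y * q) * r = r * (1 - q * y * q) * r := by
        rw [mul_sub, sub_mul, mul_one, hrr]
      rw [h1, hone_sub, star_mul, hq_sa.star_eq, hr_sa.star_eq,
        mul_smul_comm, smul_mul_assoc]
      congr 1
      simp only [mul_assoc]
    -- norm estimate
    have hqtq1 : q * (y + algebraMap ℝ A t) * q = 1 := by
      have hyt : y + algebraMap ℝ A t = cfc (fun s : ℝ => s + t) y := by
        rw [cfc_add y _ _ continuous_id'.continuousOn continuous_const.continuousOn,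
          cfc_id' ℝ y, cfc_const t y]
      rw [hyt, hq, mul_assoc,
        ← cfc_mul (fun s : ℝ => s + t) hfun y (continuous_id'.add continuous_const).continuousOn hh_cont.continuousOn,
        ← cfc_mul hfun (fun s : ℝ => (s + t) * hfun s) y hh_cont.continuousOn
          (((continuous_id'.add continuous_const).mul hh_cont).continuousOn),
        ← cfc_const_one ℝ y hy_sa]
      apply cfc_congr
      intro s hs
      have hs0 : 0 ≤ s := hspec s hs
      have hmax : max s 0 = s := max_eq_left hs0
      have hst : (0:ℝ) < s + t := by linarith
      have hsq : hfun s * hfun s = (s + t)⁻¹ := by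
        rw [hhfun]; simp only [hmax]; exact Real.mul_self_sqrt (by positivity)
      show hfun s * ((s + t) * hfun s) = 1
      have hrw : hfun s * ((s + t) * hfun s) = (hfun s * hfun s) * (s + t) := by ring
      rw [hrw, hsq, inv_mul_cancel₀ hst.ne']
    have hqeq_nonneg : 0 ≤ q * e * q := hq_sa.conjugate_nonneg he_nonneg
    have hqeq_le_one : q * e * q ≤ 1 := by
      have halg_nonneg : (0:A) ≤ algebraMap ℝ A t := by
        rw [Algebra.algebraMap_eq_smul_one]
        exact smul_nonneg ht.le (by simpa using star_mul_self_nonneg (1:A))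
      calc q * e * q ≤ q * y * q := hq_sa.conjugate_le_conjugate hey
        _ ≤ q * (y + algebraMap ℝ A t) * q :=
            hq_sa.conjugate_le_conjugate (le_add_of_nonneg_right halg_nonneg)
        _ = 1 := hqtq1
    have hnorm_qeq : ‖q * e * q‖ ≤ 1 :=
      (CStarAlgebra.norm_le_one_iff_of_nonneg _ hqeq_nonneg).mpr hqeq_le_one
    have hnorm_eq : ‖(r * q) * star (r * q)‖ = ‖q * e * q‖ := by
      rw [CStarRing.norm_self_mul_star, ← CStarRing.norm_star_mul_self]
      congr 1
      rw [star_mul, hq_sa.star_eq, hr_sa.star_eq,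
        show q * r * (r * q) = q * (r * r) * q by simp only [mul_assoc], hrr]
    calc ‖v n * b * star (v n) - e‖ = ‖e - v n * b * star (v n)‖ := norm_sub_rev _ _
      _ = ‖t • ((r * q) * star (r * q))‖ := by rw [hdiff]
      _ = t * ‖(r * q) * star (r * q)‖ := by
          rw [norm_smul, Real.norm_eq_abs, abs_of_pos ht]
      _ ≤ t * 1 := by
          rw [hnorm_eq]
          exact mul_le_mul_of_nonneg_left hnorm_qeq ht.le
      _ = 1 / (n + 1) := by rw [mul_one]
  have hnonneg : ∀ n : ℕ, (0:ℝ) ≤ ‖v n * b * star (v n) - e‖ := fun n => norm_nonneg _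
  exact squeeze_zero hnonneg hbound tendsto_one_div_add_atTop_nhds_zero_nat
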